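/- Let N_A, N_B ≥ 1, let ρ be a positive semidefinite Hermitian complex matrix with trace 1 indexed by Fin N_A × Fin N_B, and let Ψ_ref ∈ ℂ^{N_A} be a unit vector. Then the set of real numbers { Re⟨Ψ_ref, Tr_B(U ρ U†) Ψ_ref⟩ : U a unitary matrix indexed by Fin N_A × Fin N_B } has a greatest element equal to λ_1 + λ_2 + … + λ_{N_B}, the sum of the N_B largest eigenvalues of ρ counted with multiplicity. -/

import Mathlib

open Matrix
open scoped ComplexOrder

/-- The partial trace over the second tensor factor `B`:
`(Tr_B M)_{a,a'} = ∑_b M_{(a,b),(a',b)}`. -/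
noncomputable def traceB {NA NB : ℕ} (M : Matrix (Fin NA × Fin NB) (Fin NA × Fin NB) ℂ) :
    Matrix (Fin NA) (Fin NA) ℂ :=
  fun a a' => ∑ b : Fin NB, M (a, b) (a', b)

/- ----------------- auxiliary lemmas ----------------- -/

lemma knapsack_aux {N k : ℕ} (hk1 : 1 ≤ k) (hkN : k ≤ N) (μ : Fin N → ℝ) (hmono : Antitone μ)
    (s : Fin N → ℝ) (h0 : ∀ i, 0 ≤ s i) (h1 : ∀ i, s i ≤ 1)
    (hsum : ∑ i, s i = k) :
    ∑ i, μ i * s i ≤ ∑ i ∈ Finset.univ.filter (fun i : Fin N => (i : ℕ) < k), μ i := by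
  have hk : k - 1 < N := by omega
  set θ := μ ⟨k - 1, hk⟩ with hθ
  set χ : Fin N → ℝ := fun i => if (i : ℕ) < k then 1 else 0 with hχ
  have hχsum : ∑ i, χ i = k := by
    rw [hχ, Fin.sum_univ_eq_sum_range (fun m => if m < k then (1:ℝ) else 0) N,
      ← Finset.sum_filter]
    have : (Finset.range N).filter (fun m => m < k) = Finset.range k := by
      ext m; simp; omega
    simp [this]
  have hfilter : ∑ i ∈ Finset.univ.filter (fun i : Fin N => (i : ℕ) < k), μ i
      = ∑ i, μ i * χ i := by
    rw [Finset.sum_filter]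
    refine Finset.sum_congr rfl fun i _ => ?_
    by_cases hi : (i : ℕ) < k <;> simp [hχ, hi]
  have key : ∀ i, (μ i - θ) * (s i - χ i) ≤ 0 := by
    intro i
    by_cases hi : (i : ℕ) < k
    · have h1' : θ ≤ μ i := hmono (by rw [Fin.le_def]; simpa using by omega)
      have : s i - χ i ≤ 0 := by simp [hχ, hi]; linarith [h1 i]
      nlinarith
    · have h1' : μ i ≤ θ := hmono (by rw [Fin.le_def]; simpa using by omega)
      have : 0 ≤ s i - χ i := by simp [hχ, hi]; linarith [h0 i]
      nlinarith
  have expand : ∀ i, μ i * s i = (μ i - θ) * (s i - χ i) + θ * (s i - χ i) + μ i * χ i := by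
    intro i; ring
  calc ∑ i, μ i * s i
      = ∑ i, ((μ i - θ) * (s i - χ i)) + ∑ i, θ * (s i - χ i) + ∑ i, μ i * χ i := by
        simp_rw [expand]; rw [Finset.sum_add_distrib, Finset.sum_add_distrib]
    _ ≤ 0 + 0 + ∑ i, μ i * χ i := by
        gcongr ?_ + ?_ + _
        · exact Finset.sum_nonpos fun i _ => key i
        · rw [← Finset.mul_sum]
          have : ∑ i, (s i - χ i) = 0 := by rw [Finset.sum_sub_distrib, hsum, hχsum, sub_self]
          rw [this, mul_zero]
    _ = ∑ i ∈ Finset.univ.filter (fun i : Fin N => (i : ℕ) < k), μ i := by rw [hfilter]; ring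

lemma proj_diag_nonneg {n : Type*} [Fintype n] [DecidableEq n] (R : Matrix n n ℂ)
    (hH : Rᴴ = R) (hP : R * R = R) (j : n) : 0 ≤ (R j j).re := by
  have hconj : ∀ k, R k j = (starRingEnd ℂ) (R j k) := by
    intro k
    have := congrFun (congrFun hH k) j
    simpa [conjTranspose_apply] using this.symm
  have : R j j = ∑ k, (Complex.normSq (R j k) : ℂ) := by
    conv_lhs => rw [← hP]
    rw [mul_apply]
    refine Finset.sum_congr rfl fun k _ => ?_
    rw [hconj k, Complex.mul_conj]
  rw [this, Complex.re_sum]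
  exact Finset.sum_nonneg fun k _ => by simp [Complex.normSq_nonneg]

lemma proj_diag_le_one {n : Type*} [Fintype n] [DecidableEq n] (R : Matrix n n ℂ)
    (hH : Rᴴ = R) (hP : R * R = R) (j : n) : (R j j).re ≤ 1 := by
  have hH' : (1 - R)ᴴ = 1 - R := by rw [conjTranspose_sub, conjTranspose_one, hH]
  have hP' : (1 - R) * (1 - R) = 1 - R := by
    rw [mul_sub, sub_mul, sub_mul, one_mul, mul_one, one_mul, hP]
    abel
  have := proj_diag_nonneg (1 - R) hH' hP' j
  simp only [Matrix.sub_apply, one_apply_eq, Complex.sub_re, Complex.one_re] at this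
  linarith

noncomputable def projP {NA NB : ℕ} (Ψ : Fin NA → ℂ) :
    Matrix (Fin NA × Fin NB) (Fin NA × Fin NB) ℂ :=
  fun x y => Ψ x.1 * (starRingEnd ℂ) (Ψ y.1) * (if x.2 = y.2 then 1 else 0)

section projPlemmas
variable {NA NB : ℕ} (Ψ : Fin NA → ℂ)

lemma href'_aux (href : star Ψ ⬝ᵥ Ψ = 1) : ∑ a, (starRingEnd ℂ) (Ψ a) * Ψ a = 1 := by
  simpa [dotProduct] using href

lemma projP_herm : (projP (NB := NB) Ψ)ᴴ = projP Ψ := by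
  ext ⟨a, b⟩ ⟨a', b'⟩
  by_cases h : b = b' <;>
    simp [conjTranspose_apply, projP, h, eq_comm, mul_comm]

lemma projP_idem (href : star Ψ ⬝ᵥ Ψ = 1) :
    projP (NB := NB) Ψ * projP Ψ = projP Ψ := by
  ext ⟨a, b⟩ ⟨a', b'⟩
  rw [mul_apply, Fintype.sum_prod_type]
  simp only [projP, mul_ite, mul_one, mul_zero, ite_mul, zero_mul]
  simp only [Finset.sum_ite_eq', Finset.mem_univ, if_true]
  by_cases h : b = b'
  · simp only [h, if_true]
    have step : ∑ c : Fin NA, Ψ a * (starRingEnd ℂ) (Ψ c) * (Ψ c * (starRingEnd ℂ) (Ψ a')) =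
        (Ψ a * (starRingEnd ℂ) (Ψ a')) * ∑ c, (starRingEnd ℂ) (Ψ c) * Ψ c := by
      rw [Finset.mul_sum]; exact Finset.sum_congr rfl fun c _ => by ring
    rw [step, href'_aux Ψ href, mul_one]
  · simp [h]

lemma projP_trace (href : star Ψ ⬝ᵥ Ψ = 1) :
    trace (projP (NB := NB) Ψ) = (NB : ℂ) := by
  rw [trace]
  simp only [diag]
  rw [Fintype.sum_prod_type]
  simp only [projP, if_true]
  have h1 : ∀ a : Fin NA, ∑ _b : Fin NB, Ψ a * (starRingEnd ℂ) (Ψ a) * 1 =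
      (NB : ℂ) * (Ψ a * (starRingEnd ℂ) (Ψ a)) := by
    intro a; rw [Finset.sum_const]; simp [mul_comm]
  rw [Finset.sum_congr rfl fun a _ => h1 a, ← Finset.mul_sum]
  have h2 : ∑ a, Ψ a * (starRingEnd ℂ) (Ψ a) = 1 := by
    rw [← href'_aux Ψ href]; exact Finset.sum_congr rfl fun a _ => by ring
  rw [h2, mul_one]

lemma traceB_inner (M : Matrix (Fin NA × Fin NB) (Fin NA × Fin NB) ℂ) :
    star Ψ ⬝ᵥ (traceB M) *ᵥ Ψ = trace (M * projP Ψ) := by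
  rw [trace]
  simp only [dotProduct, mulVec, traceB, diag, mul_apply, dotProduct, Pi.star_apply]
  rw [Fintype.sum_prod_type]
  refine Finset.sum_congr rfl fun a _ => ?_
  rw [Finset.mul_sum]
  have hR : ∀ b : Fin NB, (∑ y, M (a,b) y * projP Ψ y (a,b)) =
      ∑ a', M (a,b) (a',b) * (Ψ a' * (starRingEnd ℂ) (Ψ a)) := by
    intro b
    rw [Fintype.sum_prod_type]
    simp only [projP, mul_ite, mul_one, mul_zero]
    refine Finset.sum_congr rfl fun a' _ => ?_
    simp [Finset.sum_ite_eq', mul_assoc]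
  rw [Finset.sum_congr rfl fun b _ => hR b, Finset.sum_comm]
  refine Finset.sum_congr rfl fun a' _ => ?_
  rw [Finset.sum_mul, Finset.mul_sum]
  exact Finset.sum_congr rfl fun b _ => by rw [RCLike.star_def]; ring

end projPlemmas

/-- div/mod equiv sending `i` to `(i / NB, i % NB)`. -/
def divModEquiv (NA NB : ℕ) (hNB : 1 ≤ NB) : Fin (NA * NB) ≃ (Fin NA × Fin NB) where
  toFun i := (⟨(i : ℕ) / NB, by
      have := i.2
      exact Nat.div_lt_of_lt_mul (Nat.mul_comm NA NB ▸ this)⟩,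
    ⟨(i : ℕ) % NB, Nat.mod_lt _ hNB⟩)
  invFun x := ⟨(x.1 : ℕ) * NB + (x.2 : ℕ), by
      have h1 := x.1.2
      have h2 := x.2.2
      calc (x.1 : ℕ) * NB + (x.2 : ℕ) < (x.1 : ℕ) * NB + NB := by omega
        _ = ((x.1 : ℕ) + 1) * NB := by ring
        _ ≤ NA * NB := Nat.mul_le_mul_right _ (by omega)⟩
  left_inv i := by
    apply Fin.ext
    show (i : ℕ) / NB * NB + (i : ℕ) % NB = i
    rw [Nat.mul_comm]
    exact Nat.div_add_mod _ _
  right_inv x := by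
    have h2 := x.2.2
    refine Prod.ext (Fin.ext ?_) (Fin.ext ?_)
    · show ((x.1 : ℕ) * NB + (x.2 : ℕ)) / NB = x.1
      rw [Nat.mul_comm, Nat.mul_add_div (by omega), Nat.div_eq_of_lt h2, Nat.add_zero]
    · show ((x.1 : ℕ) * NB + (x.2 : ℕ)) % NB = x.2
      rw [Nat.mul_comm, Nat.mul_add_mod, Nat.mod_eq_of_lt h2]

lemma divModEquiv_fst_eq (NA NB : ℕ) (hNA : 1 ≤ NA) (hNB : 1 ≤ NB) (i : Fin (NA * NB)) :
    (divModEquiv NA NB hNB i).1 = (⟨0, hNA⟩ : Fin NA) ↔ (i : ℕ) < NB := by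
  simp only [divModEquiv, Equiv.coe_fn_mk]
  rw [Fin.ext_iff]
  show (i : ℕ) / NB = 0 ↔ _
  rw [Nat.div_eq_zero_iff]
  constructor <;> intro h <;> omega

/-- Extend a unit vector to a unitary matrix having it as column `a0`. -/
lemma exists_unitary_col (NA : ℕ) (a0 : Fin NA) (Ψ : Fin NA → ℂ) (href : star Ψ ⬝ᵥ Ψ = 1) :
    ∃ A : Matrix (Fin NA) (Fin NA) ℂ, Aᴴ * A = 1 ∧ A * Aᴴ = 1 ∧ ∀ a, A a a0 = Ψ a := by
  classical
  let v : EuclideanSpace ℂ (Fin NA) := (WithLp.equiv 2 (Fin NA → ℂ)).symm Ψ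
  have hvv : (inner ℂ v v : ℂ) = 1 := by
    rw [PiLp.inner_apply]
    rw [← href]
    exact Finset.sum_congr rfl fun i _ => by rw [RCLike.inner_apply']; rfl
  have hn : ‖v‖ = 1 := by
    have h2 : ((‖v‖ : ℝ) : ℂ) ^ 2 = 1 := by rw [← hvv]; exact (inner_self_eq_norm_sq_to_K v).symm
    have h3 : ‖v‖ ^ 2 = 1 := by exact_mod_cast h2
    nlinarith [norm_nonneg v]
  have hortho : Orthonormal ℂ (({a0} : Set (Fin NA)).restrict (fun _ => v)) := by
    rw [orthonormal_iff_ite]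
    rintro ⟨i, hi⟩ ⟨j, hj⟩
    have : i = j := by
      simp only [Set.mem_singleton_iff] at hi hj; rw [hi, hj]
    simp [this, Set.restrict, hvv, hn]
  obtain ⟨b, hb⟩ := hortho.exists_orthonormalBasis_extension_of_card_eq
    (by simp [finrank_euclideanSpace])
  refine ⟨Matrix.of fun a a' => b a' a, ?_, ?_, ?_⟩
  · ext y y'
    rw [mul_apply, one_apply]
    have := (orthonormal_iff_ite.mp b.orthonormal) y y'
    rw [PiLp.inner_apply] at this
    simpa [conjTranspose_apply, RCLike.star_def, mul_comm] using this
  · rw [mul_eq_one_comm]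
    ext y y'
    rw [mul_apply, one_apply]
    have := (orthonormal_iff_ite.mp b.orthonormal) y y'
    rw [PiLp.inner_apply] at this
    simpa [conjTranspose_apply, RCLike.star_def, mul_comm] using this
  · intro a
    have := hb a0 (Set.mem_singleton a0)
    rw [Matrix.of_apply, this]; rfl


/-- `A ⊗ 1` on the product index type. -/
def kB {NA NB : ℕ} (A : Matrix (Fin NA) (Fin NA) ℂ) :
    Matrix (Fin NA × Fin NB) (Fin NA × Fin NB) ℂ :=
  fun x y => A x.1 y.1 * (if x.2 = y.2 then 1 else 0)

lemma kB_unitary {NA NB : ℕ} (A : Matrix (Fin NA) (Fin NA) ℂ) (hA2 : Aᴴ * A = 1) :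
    (kB (NB := NB) A)ᴴ * kB A = 1 := by
  ext ⟨a, b⟩ ⟨a', b'⟩
  rw [mul_apply, Fintype.sum_prod_type]
  simp only [kB, conjTranspose_apply, star_mul', mul_ite, mul_one, mul_zero, ite_mul, zero_mul,
    star_one, star_zero]
  have hone := congrFun (congrFun hA2 a) a'
  rw [mul_apply] at hone
  simp only [conjTranspose_apply] at hone
  by_cases h : b = b'
  · subst h
    simp only [Finset.sum_ite_eq', Finset.mem_univ, if_true, one_apply]
    rw [hone]
    simp [one_apply, Prod.ext_iff]
  · simp [Finset.sum_ite_eq', h, Ne.symm h, one_apply, Prod.ext_iff]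

lemma kB_proj {NA NB : ℕ} (A : Matrix (Fin NA) (Fin NA) ℂ) (a0 : Fin NA) (Ψ : Fin NA → ℂ)
    (hAcol : ∀ a, A a a0 = Ψ a) :
    projP (NB := NB) Ψ =
      kB A * diagonal (fun y : Fin NA × Fin NB => if y.1 = a0 then (1:ℂ) else 0) * (kB A)ᴴ := by
  ext ⟨a, b⟩ ⟨a', b'⟩
  rw [Matrix.mul_apply]
  have hz : ∀ z : Fin NA × Fin NB,
      (kB (NB := NB) A * diagonal (fun y : Fin NA × Fin NB => if y.1 = a0 then (1:ℂ) else 0))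
        (a, b) z = (if z = (a0, b) then A a a0 else 0) := by
    rintro ⟨c, d⟩
    rw [Matrix.mul_diagonal]
    simp only [kB, Prod.mk.injEq]
    by_cases h1 : c = a0 <;> by_cases h2 : d = b
    · subst h1; subst h2; simp
    · have h2' : ¬(b = d) := fun hh => h2 hh.symm
      simp [h1, h2, h2']
    · simp [h1, h2]
    · simp [h1, h2]
  rw [Finset.sum_congr rfl fun z _ => by rw [hz z]]
  simp only [ite_mul, zero_mul, Finset.sum_ite_eq', Finset.mem_univ, if_true]
  simp only [conjTranspose_apply, kB, projP, hAcol, star_mul']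
  by_cases h : b = b' <;> simp [h, eq_comm, RCLike.star_def]

/-- conjugation of a sandwiched matrix by a submatrix-permutation. -/
lemma submatrix_sandwich {n : Type*} [Fintype n] [DecidableEq n]
    (M N K : Matrix n n ℂ) (σ : n ≃ n) :
    M.submatrix ⇑σ id * N * K.submatrix id ⇑σ = (M * N * K).submatrix ⇑σ ⇑σ := by
  have h1 : M.submatrix ⇑σ id * N = (M * N).submatrix ⇑σ id := by
    conv_lhs => rw [← Matrix.submatrix_id_id N]
    have := Matrix.submatrix_mul_equiv M N ⇑σ (Equiv.refl n) id
    rw [Equiv.coe_refl] at this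
    exact this
  rw [h1]
  have := Matrix.submatrix_mul_equiv (M * N) K ⇑σ (Equiv.refl n) ⇑σ
  rw [Equiv.coe_refl] at this
  exact this

theorem max_compression_rate_eq_sum_largest_eigenvalues
    (NA NB : ℕ) (hNA : 1 ≤ NA) (hNB : 1 ≤ NB)
    (ρ : Matrix (Fin NA × Fin NB) (Fin NA × Fin NB) ℂ) (hρ : ρ.PosSemidef)
    (htr : ρ.trace = 1)
    (Ψref : Fin NA → ℂ) (href : star Ψref ⬝ᵥ Ψref = 1)
    (μ : Fin (NA * NB) → ℝ)
    (hμ : ∃ e : Fin (NA * NB) ≃ (Fin NA × Fin NB), μ = hρ.1.eigenvalues ∘ e)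
    (hmono : Antitone μ) :
    IsGreatest
      { x : ℝ | ∃ U : Matrix (Fin NA × Fin NB) (Fin NA × Fin NB) ℂ,
          U * Uᴴ = 1 ∧ Uᴴ * U = 1 ∧
          x = (star Ψref ⬝ᵥ (traceB (U * ρ * Uᴴ)) *ᵥ Ψref).re }
      (∑ i ∈ Finset.univ.filter (fun i : Fin (NA * NB) => (i : ℕ) < NB), μ i) := by
  classical
  obtain ⟨e, hμe⟩ := hμ
  have hH : ρ.IsHermitian := hρ.1
  set V : Matrix (Fin NA × Fin NB) (Fin NA × Fin NB) ℂ :=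
    (hH.eigenvectorUnitary : Matrix (Fin NA × Fin NB) (Fin NA × Fin NB) ℂ) with hVdef
  set D : Matrix (Fin NA × Fin NB) (Fin NA × Fin NB) ℂ :=
    diagonal (RCLike.ofReal ∘ hH.eigenvalues) with hDdef
  have hVmem := hH.eigenvectorUnitary.2
  rw [Unitary.mem_iff] at hVmem
  have hV2 : Vᴴ * V = 1 := by rw [← Matrix.star_eq_conjTranspose]; exact hVmem.1
  have hV1 : V * Vᴴ = 1 := by rw [← Matrix.star_eq_conjTranspose]; exact hVmem.2
  have hspec : Vᴴ * ρ * V = D := by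
    rw [← Matrix.star_eq_conjTranspose]
    have := hH.conjStarAlgAut_star_eigenvectorUnitary
    simp only [Unitary.conjStarAlgAut_apply, Unitary.coe_star, star_star] at this
    exact this
  have hspec' : ρ = V * D * Vᴴ := by
    rw [← hspec]
    calc ρ = (V * Vᴴ) * ρ * (V * Vᴴ) := by rw [hV1, one_mul, mul_one]
      _ = V * (Vᴴ * ρ * V) * Vᴴ := by noncomm_ring
  constructor
  · -- membership
    obtain ⟨A, hA2, hA1, hAcol⟩ := exists_unitary_col NA ⟨0, hNA⟩ Ψref href
    set B : Matrix (Fin NA × Fin NB) (Fin NA × Fin NB) ℂ := kB (NB := NB) A with hBdef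
    have hB2 : Bᴴ * B = 1 := kB_unitary A hA2
    have hB1 : B * Bᴴ = 1 := mul_eq_one_comm.mp hB2
    set χ'' : Fin NA × Fin NB → ℂ := fun y => if y.1 = (⟨0, hNA⟩ : Fin NA) then 1 else 0
      with hχ''def
    have hPB : projP Ψref = B * diagonal χ'' * Bᴴ := kB_proj A ⟨0, hNA⟩ Ψref hAcol
    set σ : (Fin NA × Fin NB) ≃ (Fin NA × Fin NB) :=
      (e.symm).trans (divModEquiv NA NB hNB) with hσdef
    set W : Matrix (Fin NA × Fin NB) (Fin NA × Fin NB) ℂ := B.submatrix id ⇑σ with hWdef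
    have hW2 : Wᴴ * W = 1 := by
      rw [hWdef, conjTranspose_submatrix]
      have := Matrix.submatrix_mul_equiv Bᴴ B ⇑σ (Equiv.refl _) ⇑σ
      rw [Equiv.coe_refl] at this
      rw [this, hB2, Matrix.submatrix_one_equiv]
    have hW1 : W * Wᴴ = 1 := mul_eq_one_comm.mp hW2
    refine ⟨W * Vᴴ, ?_, ?_, ?_⟩
    · rw [conjTranspose_mul, conjTranspose_conjTranspose]
      calc W * Vᴴ * (V * Wᴴ) = W * (Vᴴ * V) * Wᴴ := by noncomm_ring
        _ = 1 := by rw [hV2, mul_one, hW1]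
    · rw [conjTranspose_mul, conjTranspose_conjTranspose]
      calc V * Wᴴ * (W * Vᴴ) = V * (Wᴴ * W) * Vᴴ := by noncomm_ring
        _ = 1 := by rw [hW2, mul_one, hV1]
    · rw [traceB_inner]
      have hmid : W * Vᴴ * ρ * (W * Vᴴ)ᴴ = W * D * Wᴴ := by
        rw [conjTranspose_mul, conjTranspose_conjTranspose, ← hspec]
        noncomm_ring
      rw [hmid]
      have hcyc : trace (W * D * Wᴴ * projP Ψref) = trace (D * (Wᴴ * projP Ψref * W)) := by
        calc trace (W * D * Wᴴ * projP Ψref) = trace (W * (D * (Wᴴ * projP Ψref))) := by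
              rw [Matrix.mul_assoc, Matrix.mul_assoc]
          _ = trace ((D * (Wᴴ * projP Ψref)) * W) := trace_mul_comm _ _
          _ = trace (D * (Wᴴ * projP Ψref * W)) := by rw [Matrix.mul_assoc]
      rw [hcyc]
      have hWPW : Wᴴ * projP Ψref * W = diagonal (χ'' ∘ ⇑σ) := by
        rw [hPB, hWdef, conjTranspose_submatrix, submatrix_sandwich,
          show Bᴴ * (B * diagonal χ'' * Bᴴ) * B = (Bᴴ * B) * diagonal χ'' * (Bᴴ * B) by
            noncomm_ring,
          hB2, one_mul, mul_one, Matrix.submatrix_diagonal_equiv]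
      rw [hWPW, Matrix.diagonal_mul_diagonal, Matrix.trace_diagonal]
      have hterm : ∀ j, (RCLike.ofReal ∘ hH.eigenvalues) j * (χ'' ∘ ⇑σ) j =
          if ((e.symm j : ℕ) < NB) then ((hH.eigenvalues j : ℝ) : ℂ) else 0 := by
        intro j
        have hfst : (σ j).1 = (⟨0, hNA⟩ : Fin NA) ↔ ((e.symm j : ℕ) < NB) := by
          rw [hσdef]
          exact divModEquiv_fst_eq NA NB hNA hNB (e.symm j)
        simp only [hχ''def, Function.comp_apply]
        by_cases h : (e.symm j : ℕ) < NB
        · rw [if_pos (hfst.mpr h), if_pos h, mul_one]; rfl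
        · rw [if_neg (fun hc => h (hfst.mp hc)), if_neg h, mul_zero]
      rw [Finset.sum_congr rfl fun j _ => hterm j]
      rw [Complex.re_sum]
      have hre : ∀ j, (if ((e.symm j : ℕ) < NB) then ((hH.eigenvalues j : ℝ) : ℂ) else 0).re =
          if ((e.symm j : ℕ) < NB) then hH.eigenvalues j else 0 := by
        intro j; by_cases h : (e.symm j : ℕ) < NB <;> simp [h]
      rw [Finset.sum_congr rfl fun j _ => hre j]
      rw [← Equiv.sum_comp e (fun j => if ((e.symm j : ℕ) < NB) then hH.eigenvalues j else 0)]
      rw [Finset.sum_filter]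
      refine (Finset.sum_congr rfl fun i _ => ?_).symm
      rw [Equiv.symm_apply_apply]
      by_cases h : (i : ℕ) < NB <;> simp [h, hμe]
  · -- upper bound
    rintro x ⟨U, hU1, hU2, rfl⟩
    rw [traceB_inner]
    have hcyc : trace (U * ρ * Uᴴ * projP Ψref) = trace (ρ * (Uᴴ * projP Ψref * U)) := by
      calc trace (U * ρ * Uᴴ * projP Ψref) = trace (U * (ρ * (Uᴴ * projP Ψref))) := by
            rw [Matrix.mul_assoc, Matrix.mul_assoc]
        _ = trace ((ρ * (Uᴴ * projP Ψref)) * U) := trace_mul_comm _ _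
        _ = trace (ρ * (Uᴴ * projP Ψref * U)) := by rw [Matrix.mul_assoc]
    set Q : Matrix (Fin NA × Fin NB) (Fin NA × Fin NB) ℂ := Uᴴ * projP Ψref * U with hQdef
    have hQH : Qᴴ = Q := by
      rw [hQdef]
      simp only [conjTranspose_mul, conjTranspose_conjTranspose, projP_herm]
      noncomm_ring
    have hQQ : Q * Q = Q := by
      rw [hQdef]
      calc Uᴴ * projP Ψref * U * (Uᴴ * projP Ψref * U)
          = Uᴴ * (projP Ψref * (U * Uᴴ) * projP Ψref) * U := by noncomm_ring
        _ = Uᴴ * projP Ψref * U := by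
            rw [hU1, mul_one, projP_idem Ψref href]
    have htrQ : trace Q = (NB : ℂ) := by
      rw [hQdef]
      calc trace (Uᴴ * projP Ψref * U) = trace (U * (Uᴴ * projP Ψref)) :=
            trace_mul_comm _ _
        _ = trace ((U * Uᴴ) * projP Ψref) := by rw [Matrix.mul_assoc]
        _ = (NB : ℂ) := by rw [hU1, one_mul, projP_trace Ψref href]
    set R : Matrix (Fin NA × Fin NB) (Fin NA × Fin NB) ℂ := Vᴴ * Q * V with hRdef
    have hRH : Rᴴ = R := by
      rw [hRdef]
      simp only [conjTranspose_mul, conjTranspose_conjTranspose, hQH]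
      noncomm_ring
    have hRR : R * R = R := by
      rw [hRdef]
      calc Vᴴ * Q * V * (Vᴴ * Q * V) = Vᴴ * (Q * (V * Vᴴ) * Q) * V := by noncomm_ring
        _ = Vᴴ * Q * V := by rw [hV1, mul_one, hQQ]
    have htrR : trace R = (NB : ℂ) := by
      rw [hRdef]
      calc trace (Vᴴ * Q * V) = trace (V * (Vᴴ * Q)) :=
            trace_mul_comm _ _
        _ = trace ((V * Vᴴ) * Q) := by rw [Matrix.mul_assoc]
        _ = (NB : ℂ) := by rw [hV1, one_mul, htrQ]
    have hxval : trace (ρ * Q) = ∑ j, ((hH.eigenvalues j : ℝ) : ℂ) * R j j := by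
      have hstep : trace (ρ * Q) = trace (V * D * Vᴴ * Q) := by
        conv_lhs => rw [hspec']
      rw [hstep]
      calc trace (V * D * Vᴴ * Q) = trace (V * (D * (Vᴴ * Q))) := by
            rw [Matrix.mul_assoc, Matrix.mul_assoc]
        _ = trace ((D * (Vᴴ * Q)) * V) := trace_mul_comm _ _
        _ = trace (D * (Vᴴ * Q * V)) := by rw [Matrix.mul_assoc]
        _ = ∑ j, ((hH.eigenvalues j : ℝ) : ℂ) * R j j := by
            rw [trace]
            refine Finset.sum_congr rfl fun j _ => ?_
            rw [Matrix.diag_apply, hDdef, Matrix.diagonal_mul]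
            rfl
    set t : Fin NA × Fin NB → ℝ := fun j => (R j j).re with htdef
    have hxeq : (trace (U * ρ * Uᴴ * projP Ψref)).re = ∑ j, hH.eigenvalues j * t j := by
      rw [hcyc, hxval, Complex.re_sum]
      refine Finset.sum_congr rfl fun j _ => ?_
      rw [htdef]
      simp [Complex.mul_re]
    rw [hxeq]
    have ht0 : ∀ j, 0 ≤ t j := fun j => proj_diag_nonneg R hRH hRR j
    have ht1 : ∀ j, t j ≤ 1 := fun j => proj_diag_le_one R hRH hRR j
    have htsum : ∑ j, t j = NB := by
      have := congrArg Complex.re htrR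
      rw [trace, Complex.re_sum] at this
      simpa [htdef, Matrix.diag] using this
    have hkN : NB ≤ NA * NB := Nat.le_mul_of_pos_left NB (by omega)
    have hsum_e : ∑ i, μ i * (t ∘ ⇑e) i = ∑ j, hH.eigenvalues j * t j := by
      rw [hμe]
      exact Equiv.sum_comp e (fun j => hH.eigenvalues j * t j)
    rw [← hsum_e]
    exact knapsack_aux hNB hkN μ hmono (t ∘ ⇑e) (fun i => ht0 _) (fun i => ht1 _)
      (by rw [show ∑ i, (t ∘ ⇑e) i = ∑ j, t j from Equiv.sum_comp e t, htsum])
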